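/- Let c = (c_1,…,c_k) be a composition with partial sums β_i = c_1+⋯+c_i for 0 ≤ i ≤ k, and let q be a real number. Let h(x) = a_0 + a_1x + ⋯ + a_kx^k be the unique polynomial of degree at most k satisfying h(β_i) = q^{β_i} for every i = 0,1,…,k (the Lagrange interpolating polynomial at the k+1 distinct nodes β_0,…,β_k). Then its top coefficient satisfies a_k = (−1)^k · g_c(q). -/

import Mathlib

open MeasureTheory

/-- Iterated integral defining the composition polynomial, peeling off the
outermost variable first (so the list argument is the reversed composition). -/
noncomputable def gAux : List ℕ → ℝ → ℝ → ℝ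
  | [], _, _ => 1
  | a :: rest, q, u => ∫ t in q..u, t ^ (a - 1) * gAux rest q t

/-- The composition polynomial
`g_c(q) = ∫_q^1 ∫_q^{t_k} ⋯ ∫_q^{t_2} t_1^{c_1-1} ⋯ t_k^{c_k-1} dt_1 ⋯ dt_k`. -/
noncomputable def gcomp (c : List ℕ) (q : ℝ) : ℝ := gAux c.reverse q 1

/-- Partial sums `β_i = c_1 + ⋯ + c_i`. -/
def beta (c : List ℕ) (i : ℕ) : ℕ := (c.take i).sum

lemma beta_lt (d : List ℕ) (hpos : ∀ a ∈ d, 0 < a) {i j : ℕ} (hij : i < j)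
    (hj : j ≤ d.length) : beta d i < beta d j := by
  unfold beta
  have h1 : d.take j = d.take i ++ (d.drop i).take (j - i) := by
    rw [← List.take_add]; congr 1; omega
  rw [h1, List.sum_append]
  have hne : (d.drop i).take (j - i) ≠ [] := by
    apply List.ne_nil_of_length_pos
    simp only [List.length_take, List.length_drop]
    omega
  obtain ⟨x, t, hxt⟩ := List.exists_cons_of_ne_nil hne
  have hx : x ∈ d := by
    have : x ∈ (d.drop i).take (j - i) := by rw [hxt]; exact List.mem_cons_self
    exact List.mem_of_mem_drop (List.mem_of_mem_take this)
  have := hpos x hx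
  rw [hxt, List.sum_cons]
  omega

lemma beta_injOn (d : List ℕ) (hpos : ∀ a ∈ d, 0 < a) :
    Set.InjOn (fun j => ((beta d j : ℕ) : ℝ)) (Finset.range (d.length + 1)) := by
  intro i hi j hj hij
  simp only [Finset.coe_range, Set.mem_Iio] at hi hj
  have h2 : beta d i = beta d j := (Nat.cast_inj (R := ℝ)).mp (by simpa using hij)
  by_contra hne
  rcases Nat.lt_or_ge i j with h | h
  · exact absurd h2 (Nat.ne_of_lt (beta_lt d hpos h (by omega)))
  · exact absurd h2.symm (Nat.ne_of_lt (beta_lt d hpos (by omega) (by omega)))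

lemma coeff_basis' {s : Finset ℕ} {v : ℕ → ℝ} (hvs : Set.InjOn v s) {i : ℕ} (hi : i ∈ s) :
    (Lagrange.basis s v i).coeff (s.card - 1) = Lagrange.nodalWeight s v i := by
  have h1 : (Lagrange.basis s v i).coeff (s.card - 1) = (Lagrange.basis s v i).leadingCoeff := by
    rw [Polynomial.leadingCoeff, Lagrange.natDegree_basis hvs hi]
  rw [h1, Lagrange.basis, Polynomial.leadingCoeff_prod, Lagrange.nodalWeight]
  refine Finset.prod_congr rfl fun j hj => ?_
  have hij : j ≠ i := (Finset.mem_erase.mp hj).1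
  have hne : v i ≠ v j := fun he => hij (hvs (Finset.mem_of_mem_erase hj) hi he.symm)
  rw [Lagrange.basisDivisor, Polynomial.leadingCoeff_mul, Polynomial.leadingCoeff_C,
    Polynomial.leadingCoeff_X_sub_C, mul_one]

lemma coeff_interpolate' {s : Finset ℕ} (v r : ℕ → ℝ) (hvs : Set.InjOn v s) :
    (Lagrange.interpolate s v r).coeff (s.card - 1)
      = ∑ i ∈ s, r i * Lagrange.nodalWeight s v i := by
  rw [Lagrange.interpolate_apply, Polynomial.finset_sum_coeff]
  exact Finset.sum_congr rfl fun i hi => by rw [Polynomial.coeff_C_mul, coeff_basis' hvs hi]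

lemma sum_nodalWeight_zero {s : Finset ℕ} (v : ℕ → ℝ) (hvs : Set.InjOn v s) (hs : 2 ≤ s.card) :
    ∑ i ∈ s, Lagrange.nodalWeight s v i = 0 := by
  have hne : s.Nonempty := Finset.card_pos.mp (by omega)
  have h1 := coeff_interpolate' v 1 hvs
  rw [Lagrange.interpolate_one hvs hne] at h1
  simp only [Pi.one_apply, one_mul] at h1
  rw [← h1, Polynomial.coeff_one, if_neg (by omega)]

lemma gAux_formula (d : List ℕ) : (∀ a ∈ d, 0 < a) → ∀ (q u : ℝ),
    gAux d.reverse q u = (-1 : ℝ) ^ d.length * ∑ i ∈ Finset.range (d.length + 1),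
      q ^ beta d i * u ^ (d.sum - beta d i) *
        Lagrange.nodalWeight (Finset.range (d.length + 1)) (fun j => ((beta d j : ℕ) : ℝ)) i := by
  induction d using List.reverseRecOn with
  | nil =>
    intro _ q u
    simp [gAux, beta, Lagrange.nodalWeight]
  | append_singleton d' a ih =>
    intro hpos q u
    have ha : 0 < a := hpos a (by simp)
    have hpos' : ∀ x ∈ d', 0 < x := fun x hx => hpos x (by simp [hx])
    have hB1 : ∀ i, i ≤ d'.length → beta (d' ++ [a]) i = beta d' i := by
      intro i hi; unfold beta; rw [List.take_append_of_le_length hi]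
    have hB2 : beta (d' ++ [a]) (d'.length + 1) = d'.sum + a := by
      unfold beta
      rw [List.take_of_length_le (by simp), List.sum_append]; simp
    have hBle : ∀ i, beta d' i ≤ d'.sum := by
      intro i; unfold beta
      conv_rhs => rw [← List.take_append_drop i d']
      rw [List.sum_append]; omega
    have hlen : (d' ++ [a]).length = d'.length + 1 := by simp
    have hsum : (d' ++ [a]).sum = d'.sum + a := by simp
    have hinj := beta_injOn (d' ++ [a]) hpos
    rw [hlen] at hinj
    -- rewrite LHS as integral
    rw [show (d' ++ [a]).reverse = a :: d'.reverse from by simp]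
    show (∫ t in q..u, t ^ (a - 1) * gAux d'.reverse q t) = _
    -- pointwise rewriting of the integrand
    have hpt : ∀ t : ℝ, t ^ (a - 1) * gAux d'.reverse q t
        = ∑ i ∈ Finset.range (d'.length + 1),
          ((-1 : ℝ) ^ d'.length * (q ^ beta d' i *
            Lagrange.nodalWeight (Finset.range (d'.length + 1))
              (fun j => ((beta d' j : ℕ) : ℝ)) i)) * t ^ (d'.sum + a - beta d' i - 1) := by
      intro t
      rw [ih hpos' q t]
      simp only [Finset.mul_sum]
      refine Finset.sum_congr rfl fun i hi => ?_
      have h1 : beta d' i ≤ d'.sum := hBle i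
      have h2 : a - 1 + (d'.sum - beta d' i) = d'.sum + a - beta d' i - 1 := by omega
      calc t ^ (a - 1) * ((-1 : ℝ) ^ d'.length * (q ^ beta d' i * t ^ (d'.sum - beta d' i) *
              Lagrange.nodalWeight (Finset.range (d'.length + 1))
                (fun j => ((beta d' j : ℕ) : ℝ)) i))
          = ((-1 : ℝ) ^ d'.length * (q ^ beta d' i *
              Lagrange.nodalWeight (Finset.range (d'.length + 1))
                (fun j => ((beta d' j : ℕ) : ℝ)) i)) *
            (t ^ (a - 1) * t ^ (d'.sum - beta d' i)) := by ring
        _ = _ := by rw [← pow_add, h2]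
    rw [intervalIntegral.integral_congr (fun t _ => hpt t)]
    rw [intervalIntegral.integral_finset_sum (f := fun i (x : ℝ) => (-1 : ℝ) ^ d'.length *
        (q ^ beta d' i * Lagrange.nodalWeight (Finset.range (d'.length + 1))
          (fun j => ((beta d' j : ℕ) : ℝ)) i) * x ^ (d'.sum + a - beta d' i - 1))
      (fun i _ => ((continuous_const.mul (continuous_pow _)).intervalIntegrable _ _))]
    simp only [intervalIntegral.integral_const_mul, integral_pow]
    rw [hlen, hsum]
    have hWrel : ∀ i ∈ Finset.range (d'.length + 1),
        Lagrange.nodalWeight (Finset.range (d'.length + 1 + 1))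
            (fun j => ((beta (d' ++ [a]) j : ℕ) : ℝ)) i
          = Lagrange.nodalWeight (Finset.range (d'.length + 1))
              (fun j => ((beta d' j : ℕ) : ℝ)) i
              * (((beta d' i : ℕ) : ℝ) - ((d'.sum + a : ℕ) : ℝ))⁻¹ := by
      intro i hi
      rw [Finset.mem_range] at hi
      rw [Lagrange.nodalWeight, Finset.range_add_one,
        Finset.erase_insert_of_ne (by omega : d'.length + 1 ≠ i),
        Finset.prod_insert (fun hmem => absurd (Finset.mem_of_mem_erase hmem) (by simp)),
        hB2, hB1 i (by omega), mul_comm]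
      congr 1
      rw [Lagrange.nodalWeight]
      refine Finset.prod_congr rfl fun j hj => ?_
      have hj' : j < d'.length + 1 := Finset.mem_range.mp (Finset.mem_of_mem_erase hj)
      rw [hB1 j (by omega)]
    have hsum0 : ∑ i ∈ Finset.range (d'.length + 1 + 1),
        Lagrange.nodalWeight (Finset.range (d'.length + 1 + 1))
          (fun j => ((beta (d' ++ [a]) j : ℕ) : ℝ)) i = 0 :=
      sum_nodalWeight_zero _ hinj (by simp)
    have hWm : Lagrange.nodalWeight (Finset.range (d'.length + 1 + 1))
        (fun j => ((beta (d' ++ [a]) j : ℕ) : ℝ)) (d'.length + 1)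
        = -∑ i ∈ Finset.range (d'.length + 1),
            Lagrange.nodalWeight (Finset.range (d'.length + 1 + 1))
              (fun j => ((beta (d' ++ [a]) j : ℕ) : ℝ)) i := by
      rw [Finset.sum_range_succ] at hsum0; linarith
    conv_rhs => rw [Finset.sum_range_succ]
    rw [hB2, Nat.sub_self, pow_zero, mul_one, hWm]
    have hR : (∑ i ∈ Finset.range (d'.length + 1),
          q ^ beta (d' ++ [a]) i * u ^ (d'.sum + a - beta (d' ++ [a]) i) *
            Lagrange.nodalWeight (Finset.range (d'.length + 1 + 1))
              (fun j => ((beta (d' ++ [a]) j : ℕ) : ℝ)) i)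
        + q ^ (d'.sum + a) * -(∑ i ∈ Finset.range (d'.length + 1),
            Lagrange.nodalWeight (Finset.range (d'.length + 1 + 1))
              (fun j => ((beta (d' ++ [a]) j : ℕ) : ℝ)) i)
        = ∑ i ∈ Finset.range (d'.length + 1),
            (q ^ beta (d' ++ [a]) i * u ^ (d'.sum + a - beta (d' ++ [a]) i) *
              Lagrange.nodalWeight (Finset.range (d'.length + 1 + 1))
                (fun j => ((beta (d' ++ [a]) j : ℕ) : ℝ)) i
            - q ^ (d'.sum + a) *
              Lagrange.nodalWeight (Finset.range (d'.length + 1 + 1))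
                (fun j => ((beta (d' ++ [a]) j : ℕ) : ℝ)) i) := by
      rw [mul_neg, Finset.mul_sum, ← sub_eq_add_neg, ← Finset.sum_sub_distrib]
    rw [hR, Finset.mul_sum]
    refine Finset.sum_congr rfl fun i hi => ?_
    rw [Finset.mem_range] at hi
    rw [hB1 i (by omega), hWrel i (Finset.mem_range.mpr hi)]
    have h1 : beta d' i ≤ d'.sum := hBle i
    have he : d'.sum + a - beta d' i - 1 + 1 = d'.sum + a - beta d' i := by omega
    have hcast : (↑(d'.sum + a - beta d' i - 1) : ℝ) + 1
        = ((d'.sum + a - beta d' i : ℕ) : ℝ) := by exact_mod_cast he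
    rw [he, hcast]
    have hq : q ^ (d'.sum + a) = q ^ beta d' i * q ^ (d'.sum + a - beta d' i) := by
      rw [← pow_add]; congr 1; omega
    rw [hq]
    have hne0 : ((d'.sum + a - beta d' i : ℕ) : ℝ) ≠ 0 :=
      Nat.cast_ne_zero.mpr (by omega)
    have hc2 : ((beta d' i : ℕ) : ℝ) - ((d'.sum + a : ℕ) : ℝ)
        = -((d'.sum + a - beta d' i : ℕ) : ℝ) := by
      rw [Nat.cast_sub (by omega : beta d' i ≤ d'.sum + a)]; ring
    rw [hc2, pow_succ, inv_neg, div_eq_mul_inv]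
    ring


/-- Theorem: if `h` is the polynomial of degree at most `k` interpolating the
points `(β_i, q^{β_i})` for `i = 0, …, k`, then its top coefficient is
`a_k = (−1)^k · g_c(q)`. -/
theorem composition_polynomial_interpolation (c : List ℕ) (hpos : ∀ a ∈ c, 0 < a)
    (q : ℝ) (h : Polynomial ℝ) (hdeg : h.degree ≤ c.length)
    (hinterp : ∀ i ∈ Finset.range (c.length + 1),
      h.eval ((beta c i : ℝ)) = q ^ beta c i) :
    h.coeff c.length = (-1) ^ c.length * gcomp c q := by
  have hinj := beta_injOn c hpos
  have hcard : (Finset.range (c.length + 1)).card = c.length + 1 := Finset.card_range _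
  have hlt : h.degree < (Finset.range (c.length + 1)).card := by
    rw [hcard]
    exact lt_of_le_of_lt hdeg (by exact_mod_cast Nat.lt_succ_self c.length)
  have heq : h = Lagrange.interpolate (Finset.range (c.length + 1))
      (fun j => ((beta c j : ℕ) : ℝ)) (fun j => q ^ beta c j) :=
    Lagrange.eq_interpolate_of_eval_eq _ hinj hlt hinterp
  have hco := coeff_interpolate' (fun j => ((beta c j : ℕ) : ℝ)) (fun j => q ^ beta c j) hinj
  rw [hcard] at hco
  simp only [Nat.add_sub_cancel] at hco
  rw [heq, hco, gcomp, gAux_formula c hpos q 1]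
  simp only [one_pow, mul_one]
  rw [← mul_assoc, ← mul_pow]
  norm_num
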